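/- Let k be a field, W and V k-vector spaces, u : W → V an isomorphism and φ : W → V linear. Then the map W[T] → V[T] sending Σ wᵢTⁱ to Σ φ(wᵢ)Tⁱ − Σ u(wᵢ)Tⁱ⁺¹ is injective, and its cokernel is isomorphic to V via the inclusion of constants V → V[T] followed by the quotient. -/

import Mathlib

open Polynomial

/-- Let `u : W → V` be an isomorphism of `k`-vector spaces and `φ : W → V` linear. Then
the map `W[T] → V[T]`, `Σ wᵢTⁱ ↦ Σ φ(wᵢ)Tⁱ − Σ u(wᵢ)Tⁱ⁺¹`, is injective and its cokernel
is isomorphic to `V` via the inclusion of constants followed by the quotient map. -/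
theorem injective_and_coker_of_phi_sub_uT
    {k : Type*} [Field k] {W V : Type*}
    [AddCommGroup W] [Module k W] [AddCommGroup V] [Module k V]
    (u : W →ₗ[k] V) (hu : Function.Bijective u) (φ : W →ₗ[k] V)
    (Ψ : PolynomialModule k W →ₗ[k] PolynomialModule k V)
    (hΨ : ∀ p, Ψ p = PolynomialModule.map k φ p - (X : k[X]) • PolynomialModule.map k u p) :
    Function.Injective Ψ ∧
      Function.Bijective ((LinearMap.range Ψ).mkQ.comp (PolynomialModule.lsingle k 0)) := by
  -- coefficient formula
  have hmap : ∀ (f : V →ₗ[k] V) (p : PolynomialModule k V) (n : ℕ),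
      (PolynomialModule.map k f p).coeff n = f (p.coeff n) := fun f p n => Finsupp.mapRange_apply (hf := f.map_zero)
  have hmapW : ∀ (f : W →ₗ[k] V) (p : PolynomialModule k W) (n : ℕ),
      (PolynomialModule.map k f p).coeff n = f (p.coeff n) := fun f p n => Finsupp.mapRange_apply (hf := f.map_zero)
  have key : ∀ (p : PolynomialModule k W) (n : ℕ),
      (Ψ p).coeff n = φ (p.coeff n) - (if 1 ≤ n then u (p.coeff (n - 1)) else 0) := by
    intro p n
    rw [hΨ]
    have h1 : (PolynomialModule.map k φ p - (X : k[X]) • PolynomialModule.map k u p).coeff n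
        = (PolynomialModule.map k φ p).coeff n - ((X : k[X]) • PolynomialModule.map k u p).coeff n :=
      Finsupp.sub_apply ..
    rw [h1, hmapW]
    congr 1
    rw [← Polynomial.monomial_one_one_eq_X, PolynomialModule.monomial_smul_apply]
    split_ifs with h
    · rw [one_smul, hmapW]
    · rfl
  -- if all coefficients of Ψ p in degrees ≥ 1 vanish, then p = 0
  have main : ∀ p : PolynomialModule k W, (∀ m, 1 ≤ m → (Ψ p).coeff m = 0) → p = 0 := by
    intro p hp
    by_contra hne
    have hsupp : p.coeff.support.Nonempty := by
      rw [Finsupp.support_nonempty_iff]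
      exact PolynomialModule.coeff_eq_zero.not.mpr hne
    set n := p.coeff.support.max' hsupp with hn
    have hpn : p.coeff n ≠ 0 := Finsupp.mem_support_iff.mp (p.coeff.support.max'_mem hsupp)
    have hpn1 : p.coeff (n + 1) = 0 := by
      by_contra h
      have := p.coeff.support.le_max' (n + 1) (Finsupp.mem_support_iff.mpr h)
      omega
    have hk := key p (n + 1)
    rw [hp (n + 1) (by omega), hpn1, if_pos (by omega), map_zero, zero_sub] at hk
    have h0 : u (p.coeff (n + 1 - 1)) = 0 := neg_eq_zero.mp hk.symm
    rw [Nat.add_sub_cancel] at h0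
    exact hpn (hu.injective (by rw [h0, map_zero]))
  have hinj : Function.Injective Ψ := by
    rw [injective_iff_map_eq_zero Ψ]
    intro p hp
    exact main p fun m _ => by rw [hp]; rfl
  refine ⟨hinj, ?_, ?_⟩
  · -- injectivity of the composite
    rw [injective_iff_map_eq_zero]
    intro v hv
    simp only [LinearMap.comp_apply, Submodule.mkQ_apply, Submodule.Quotient.mk_eq_zero,
      LinearMap.mem_range] at hv
    obtain ⟨p, hp⟩ := hv
    have hp0 : p = 0 := by
      apply main
      intro m hm
      rw [hp, PolynomialModule.lsingle_apply, if_neg (by omega)]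
    rw [hp0, map_zero] at hp
    have := congrArg (fun q : PolynomialModule k V => q.coeff 0) hp
    simpa [PolynomialModule.lsingle_apply] using this.symm
  · -- surjectivity of the composite
    have claim : ∀ (N : ℕ) (q : PolynomialModule k V), (∀ n, N ≤ n → q.coeff n = 0) →
        ∃ (p : PolynomialModule k W) (v : V), q = Ψ p + PolynomialModule.lsingle k 0 v := by
      intro N
      induction N with
      | zero =>
        intro q hq
        refine ⟨0, 0, ?_⟩
        simp only [map_zero, add_zero]
        exact PolynomialModule.ext (Finsupp.ext fun m => hq m (Nat.zero_le m))
      | succ N ih =>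
        intro q hq
        match N, ih with
        | 0, _ =>
          refine ⟨0, q.coeff 0, ?_⟩
          rw [map_zero, zero_add]
          refine PolynomialModule.ext (Finsupp.ext fun m => ?_)
          show q.coeff m = (PolynomialModule.lsingle k 0 (q.coeff 0)).coeff m
          rw [PolynomialModule.lsingle_apply]
          rcases Nat.eq_zero_or_pos m with h | h
          · subst h; rw [if_pos rfl]
          · rw [if_neg (by omega)]
            exact hq m (by omega)
        | (M + 1), ih =>
          obtain ⟨w, hw⟩ := hu.surjective (q.coeff (M + 1))
          set q' : PolynomialModule k V := q + Ψ (PolynomialModule.lsingle k M w) with hq'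
          have hq'0 : ∀ n, M + 1 ≤ n → q'.coeff n = 0 := by
            intro n hn
            have : q'.coeff n = q.coeff n + (Ψ (PolynomialModule.lsingle k M w)).coeff n := Finsupp.add_apply ..
            rw [this, key]
            rcases Nat.lt_or_ge n (M + 2) with h | h
            · have hnM : n = M + 1 := by omega
              subst hnM
              have h1 : ((PolynomialModule.lsingle k M) w).coeff (M + 1) = 0 := by
                rw [PolynomialModule.lsingle_apply, if_neg (by omega)]
              have h2 : ((PolynomialModule.lsingle k M) w).coeff (M + 1 - 1) = w := by
                rw [PolynomialModule.lsingle_apply, if_pos (by omega)]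
              rw [h1, h2, map_zero, if_pos (by omega), hw]
              abel
            · rw [hq n (by omega)]
              simp only [PolynomialModule.lsingle_apply, if_neg (by omega : ¬ M = n),
                if_pos (by omega : 1 ≤ n), if_neg (by omega : ¬ M = n - 1), map_zero, sub_zero,
                add_zero, zero_add]
          obtain ⟨p, v, hpv⟩ := ih q' hq'0
          refine ⟨p - PolynomialModule.lsingle k M w, v, ?_⟩
          rw [map_sub]
          have : q = q' - Ψ (PolynomialModule.lsingle k M w) := by rw [hq']; abel
          rw [this, hpv]
          abel
    intro y
    obtain ⟨q, rfl⟩ := Submodule.Quotient.mk_surjective _ y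
    obtain ⟨N, hN⟩ : ∃ N : ℕ, ∀ n, N ≤ n → q.coeff n = 0 := by
      rcases Finset.exists_nat_subset_range q.coeff.support with ⟨N, hNs⟩
      exact ⟨N, fun n hn => Finsupp.notMem_support_iff.mp
        (fun h => by have := Finset.mem_range.mp (hNs h); omega)⟩
    obtain ⟨p, v, hpv⟩ := claim N q hN
    refine ⟨v, ?_⟩
    simp only [LinearMap.comp_apply, Submodule.mkQ_apply]
    rw [hpv, Submodule.Quotient.eq]
    have he : PolynomialModule.lsingle k 0 v - (Ψ p + PolynomialModule.lsingle k 0 v) = Ψ (-p) := by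
      rw [map_neg]; abel
    rw [he]
    exact LinearMap.mem_range_self Ψ (-p)
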